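/- Let ℓ : [0,1] → ℝ^d be a segment, ℓ(x) = u + v·x for u, v ∈ ℝ^d. Let C ⊆ ℝ^d be a finite set of k points with weights w : C → [0,∞), and let lip : [0,∞) → [0,∞) be an r-log-Lipschitz function. Define g : [0,1] → [0,∞) by g(x) = min_{c∈C} lip(w(c)·‖c − ℓ(x)‖₂). Then g is 2k-piecewise monotonic, i.e., [0,1] can be partitioned into at most 2k consecutive intervals on each of which g is monotone. -/

import Mathlib

open Set

section Aux

variable {ι : Type*}

lemma aux_inf'_mono (S : Finset ι) (hS : S.Nonempty) (f : ι → ℝ → ℝ) (I : Set ℝ)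
    (h : ∀ i ∈ S, MonotoneOn (f i) I) :
    MonotoneOn (fun x => S.inf' hS (fun i => f i x)) I := by
  intro x hx y hy hxy
  obtain ⟨i, hiS, hieq⟩ := S.exists_mem_eq_inf' hS (fun i => f i y)
  simp only
  rw [hieq]
  exact le_trans (Finset.inf'_le _ hiS) (h i hiS hx hy hxy)

lemma aux_inf'_anti (S : Finset ι) (hS : S.Nonempty) (f : ι → ℝ → ℝ) (I : Set ℝ)
    (h : ∀ i ∈ S, AntitoneOn (f i) I) :
    AntitoneOn (fun x => S.inf' hS (fun i => f i x)) I := by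
  intro x hx y hy hxy
  obtain ⟨i, hiS, hieq⟩ := S.exists_mem_eq_inf' hS (fun i => f i x)
  simp only
  rw [hieq]
  exact le_trans (Finset.inf'_le _ hiS) (h i hiS hx hy hxy)

lemma aux_inf'_continuous (S : Finset ι) (hS : S.Nonempty) (f : ι → ℝ → ℝ) :
    (∀ i ∈ S, Continuous (f i)) → Continuous (fun x => S.inf' hS (fun i => f i x)) := by
  induction hS using Finset.Nonempty.cons_induction with
  | singleton a => intro h; simpa using h a (by simp)
  | cons a s ha hs ih =>
      intro h
      have heq : (fun x => (Finset.cons a s ha).inf' (Finset.cons_nonempty ha) (fun i => f i x))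
          = fun x => min (f a x) (s.inf' hs (fun i => f i x)) := by
        funext x
        rw [Finset.inf'_cons]
      rw [heq]
      exact (h a (by simp)).min (ih (fun i hi => h i (by simp [hi])))

lemma aux_split (S : Finset ι) (hS : S.Nonempty) (f : ι → ℝ → ℝ)
    (hc : ∀ i ∈ S, Continuous (f i)) (p q : ℝ) (hpq : p ≤ q)
    (h : ∀ i ∈ S, MonotoneOn (f i) (Icc p q) ∨ AntitoneOn (f i) (Icc p q)) :
    ∃ s ∈ Icc p q, MonotoneOn (fun x => S.inf' hS (fun i => f i x)) (Icc p s) ∧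
      AntitoneOn (fun x => S.inf' hS (fun i => f i x)) (Icc s q) := by
  classical
  set U := S.filter (fun i => MonotoneOn (f i) (Icc p q)) with hUdef
  set D := S.filter (fun i => ¬ MonotoneOn (f i) (Icc p q)) with hDdef
  have hUD : U ∪ D = S := Finset.filter_union_filter_not_eq _ S
  rcases D.eq_empty_or_nonempty with hDe | hDne
  · -- all monotone
    refine ⟨q, ⟨hpq, le_refl q⟩, ?_, ?_⟩
    · apply aux_inf'_mono
      intro i hi
      by_cases hm : MonotoneOn (f i) (Icc p q)
      · exact hm
      · exfalso
        have hiD : i ∈ D := by rw [hDdef]; exact Finset.mem_filter.2 ⟨hi, hm⟩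
        rw [hDe] at hiD
        exact absurd hiD (Finset.notMem_empty i)
    · rw [Set.Icc_self]
      exact Set.subsingleton_singleton.antitoneOn _
  rcases U.eq_empty_or_nonempty with hUe | hUne
  · -- all antitone
    refine ⟨p, ⟨le_refl p, hpq⟩, ?_, ?_⟩
    · rw [Set.Icc_self]
      exact Set.subsingleton_singleton.monotoneOn _
    · apply aux_inf'_anti
      intro i hi
      rcases h i hi with hm | ha
      · exfalso
        have hiU : i ∈ U := by rw [hUdef]; exact Finset.mem_filter.2 ⟨hi, hm⟩
        rw [hUe] at hiU
        exact absurd hiU (Finset.notMem_empty i)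
      · exact ha
  · set A := fun x => U.inf' hUne (fun i => f i x) with hAdef
    set B := fun x => D.inf' hDne (fun i => f i x) with hBdef
    have hUS : U ⊆ S := Finset.filter_subset _ _
    have hDS : D ⊆ S := Finset.filter_subset _ _
    have hAB : ∀ x, S.inf' hS (fun i => f i x) = min (A x) (B x) := by
      intro x
      apply le_antisymm
      · apply le_min
        · exact Finset.le_inf' _ _ (fun i hi => Finset.inf'_le _ (hUS hi))
        · exact Finset.le_inf' _ _ (fun i hi => Finset.inf'_le _ (hDS hi))
      · apply Finset.le_inf'
        intro i hi
        rw [← hUD] at hi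
        rcases Finset.mem_union.1 hi with hiU | hiD
        · exact le_trans (min_le_left _ _) (Finset.inf'_le _ hiU)
        · exact le_trans (min_le_right _ _) (Finset.inf'_le _ hiD)
    have hAmono : MonotoneOn A (Icc p q) := by
      apply aux_inf'_mono
      intro i hi
      rw [hUdef] at hi
      exact (Finset.mem_filter.1 hi).2
    have hBanti : AntitoneOn B (Icc p q) := by
      apply aux_inf'_anti
      intro i hi
      rcases h i (hDS hi) with hm | ha
      · exfalso
        rw [hDdef] at hi
        exact (Finset.mem_filter.1 hi).2 hm
      · exact ha
    have hAcont : Continuous A := aux_inf'_continuous _ _ _ (fun i hi => hc i (hUS hi))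
    have hBcont : Continuous B := aux_inf'_continuous _ _ _ (fun i hi => hc i (hDS hi))
    set E : Set ℝ := {x | x ∈ Icc p q ∧ A x ≤ B x} with hEdef
    have hne : (insert p E).Nonempty := ⟨p, Set.mem_insert _ _⟩
    have hbdd : BddAbove (insert p E) := by
      refine ⟨q, ?_⟩
      rintro x (rfl | hx)
      · exact hpq
      · exact hx.1.2
    set s := sSup (insert p E) with hsdef
    have hps : p ≤ s := le_csSup hbdd (Set.mem_insert _ _)
    have hsq : s ≤ q := by
      apply csSup_le hne
      rintro x (rfl | hx)
      · exact hpq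
      · exact hx.1.2
    have key1 : ∀ x ∈ Icc p q, x < s → A x ≤ B x := by
      intro x hx hxs
      obtain ⟨z, hz, hxz⟩ := exists_lt_of_lt_csSup hne hxs
      rcases hz with rfl | hzE
      · exact absurd hxz (not_lt.2 hx.1)
      · calc A x ≤ A z := hAmono hx hzE.1 hxz.le
          _ ≤ B z := hzE.2
          _ ≤ B x := hBanti hx hzE.1 hxz.le
    have key2 : ∀ x ∈ Icc p q, s < x → B x ≤ A x := by
      intro x hx hsx
      by_contra hn
      push_neg at hn
      exact absurd (le_csSup hbdd (Set.mem_insert_of_mem _ ⟨hx, hn.le⟩)) (not_le.2 hsx)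
    have keyl : p < s → A s ≤ B s := by
      intro hps'
      have hev : ∀ᶠ x in nhdsWithin s (Iio s), A x - B x ≤ 0 := by
        filter_upwards [Ioo_mem_nhdsLT_of_mem (⟨hps', le_refl s⟩ : s ∈ Ioc p s)] with x hx
        have := key1 x ⟨hx.1.le, hx.2.le.trans hsq⟩ hx.2
        linarith
      have hlim : Filter.Tendsto (fun x => A x - B x) (nhdsWithin s (Iio s)) (nhds (A s - B s)) :=
        ((hAcont.sub hBcont).tendsto s).mono_left nhdsWithin_le_nhds
      have := le_of_tendsto hlim hev
      linarith
    have keyr : s < q → B s ≤ A s := by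
      intro hsq'
      have hev : ∀ᶠ x in nhdsWithin s (Ioi s), B x - A x ≤ 0 := by
        filter_upwards [Ioo_mem_nhdsGT_of_mem (⟨le_refl s, hsq'⟩ : s ∈ Ico s q)] with x hx
        have := key2 x ⟨hps.trans hx.1.le, hx.2.le⟩ hx.1
        linarith
      have hlim : Filter.Tendsto (fun x => B x - A x) (nhdsWithin s (Ioi s)) (nhds (B s - A s)) :=
        ((hBcont.sub hAcont).tendsto s).mono_left nhdsWithin_le_nhds
      have := le_of_tendsto hlim hev
      linarith
    refine ⟨s, ⟨hps, hsq⟩, ?_, ?_⟩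
    · intro x hx y hy hxy
      have hxq : x ∈ Icc p q := ⟨hx.1, hx.2.trans hsq⟩
      have hyq : y ∈ Icc p q := ⟨hy.1, hy.2.trans hsq⟩
      simp only [hAB]
      rcases eq_or_lt_of_le hy.2 with hyel | hys
      · rcases eq_or_lt_of_le hps with hpse | hps'
        · have hxy' : x = y := le_antisymm hxy (by rw [hyel, ← hpse]; exact hx.1)
          rw [hxy']
        · have h1 : A s ≤ B s := keyl hps'
          rw [hyel, min_eq_left h1]
          exact (min_le_left _ _).trans (hAmono hxq ⟨hps, hsq⟩ hx.2)
      · have h1 : A y ≤ B y := key1 y hyq hys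
        rw [min_eq_left h1]
        exact (min_le_left _ _).trans (hAmono hxq hyq hxy)
    · intro x hx y hy hxy
      have hxq : x ∈ Icc p q := ⟨hps.trans hx.1, hx.2⟩
      have hyq : y ∈ Icc p q := ⟨hps.trans hy.1, hy.2⟩
      simp only [hAB]
      rcases eq_or_lt_of_le hx.1 with hxe | hsx
      · rcases eq_or_lt_of_le hsq with hsqe | hsq'
        · have hxy' : x = y := le_antisymm hxy (hy.2.trans (hsqe ▸ hx.1))
          rw [hxy']
        · have h1 : B s ≤ A s := keyr hsq'
          rw [← hxe, min_eq_right h1]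
          exact (min_le_right _ _).trans (hBanti ⟨hps, hsq⟩ hyq (hxe ▸ hxy))
      · have h1 : B x ≤ A x := key2 x hxq hsx
        rw [min_eq_right h1]
        exact (min_le_right _ _).trans (hBanti hxq hyq hxy)

lemma aux_rec (S : Finset ι) (hS : S.Nonempty) (f : ι → ℝ → ℝ) (t : ι → ℝ)
    (hc : ∀ i ∈ S, Continuous (f i))
    (ht01 : ∀ i ∈ S, t i ∈ Icc (0:ℝ) 1)
    (hta : ∀ i ∈ S, AntitoneOn (f i) (Icc 0 (t i)))
    (htm : ∀ i ∈ S, MonotoneOn (f i) (Icc (t i) 1)) :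
    ∀ n (p : ℝ), p ∈ Icc (0:ℝ) 1 → (S.filter (fun i => p < t i)).card ≤ n →
      ∃ (m : ℕ) (a : ℕ → ℝ), m ≤ 2 * n + 1 ∧ a 0 = p ∧ a m = 1 ∧
        (∀ j < m, a j ≤ a (j + 1)) ∧
        (∀ j < m, MonotoneOn (fun x => S.inf' hS (fun i => f i x)) (Icc (a j) (a (j+1))) ∨
          AntitoneOn (fun x => S.inf' hS (fun i => f i x)) (Icc (a j) (a (j+1)))) := by
  classical
  intro n
  induction n with
  | zero =>
    intro p hp hcard
    have hfe : S.filter (fun i => p < t i) = ∅ := Finset.card_eq_zero.1 (Nat.le_zero.1 hcard)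
    have hmono : MonotoneOn (fun x => S.inf' hS (fun i => f i x)) (Icc p 1) := by
      apply aux_inf'_mono
      intro i hi
      have hti : ¬ p < t i := by
        intro hlt
        have hmem : i ∈ S.filter (fun i => p < t i) := Finset.mem_filter.2 ⟨hi, hlt⟩
        rw [hfe] at hmem
        exact absurd hmem (Finset.notMem_empty i)
      exact (htm i hi).mono (Icc_subset_Icc_left (not_lt.1 hti))
    refine ⟨1, fun j => if j = 0 then p else 1, by norm_num, by simp, by simp, ?_, ?_⟩
    · intro j hj
      simp only [Nat.lt_one_iff] at hj
      subst hj
      simpa using hp.2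
    · intro j hj
      simp only [Nat.lt_one_iff] at hj
      subst hj
      left
      simpa using hmono
  | succ n ih =>
    intro p hp hcard
    rcases (S.filter (fun i => p < t i)).eq_empty_or_nonempty with hfe | hfne
    · obtain ⟨m0, a0, hm0, h1, h2, h3, h4⟩ := ih p hp (by simp [hfe])
      exact ⟨m0, a0, by omega, h1, h2, h3, h4⟩
    · obtain ⟨i1, hi1f, ht1eq⟩ := Finset.exists_mem_eq_inf' hfne t
      set t1 := (S.filter (fun i => p < t i)).inf' hfne t with ht1def
      have hi1S : i1 ∈ S := (Finset.mem_filter.1 hi1f).1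
      have hpt1 : p < t1 := by rw [ht1eq]; exact (Finset.mem_filter.1 hi1f).2
      have ht11 : t1 ≤ 1 := by rw [ht1eq]; exact (ht01 i1 hi1S).2
      have ht10 : (0:ℝ) ≤ t1 := hp.1.trans hpt1.le
      have hside : ∀ i ∈ S, MonotoneOn (f i) (Icc p t1) ∨ AntitoneOn (f i) (Icc p t1) := by
        intro i hi
        by_cases hti : p < t i
        · right
          have h1 : t1 ≤ t i := Finset.inf'_le _ (Finset.mem_filter.2 ⟨hi, hti⟩)
          exact (hta i hi).mono (Icc_subset_Icc hp.1 h1)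
        · left
          exact (htm i hi).mono (Icc_subset_Icc (not_lt.1 hti) ht11)
      obtain ⟨s, hsmem, hsmono, hsanti⟩ := aux_split S hS f hc p t1 hpt1.le hside
      have hcard' : (S.filter (fun i => t1 < t i)).card ≤ n := by
        have hsub : S.filter (fun i => t1 < t i) ⊆ (S.filter (fun i => p < t i)).erase i1 := by
          intro i hi
          have hiS := (Finset.mem_filter.1 hi).1
          have h1 : t1 < t i := (Finset.mem_filter.1 hi).2
          refine Finset.mem_erase.2 ⟨?_, Finset.mem_filter.2 ⟨hiS, hpt1.trans h1⟩⟩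
          rintro rfl
          rw [← ht1eq] at h1
          exact lt_irrefl _ h1
        have h2 := Finset.card_le_card hsub
        rw [Finset.card_erase_of_mem hi1f] at h2
        omega
      obtain ⟨m', a', hm', ha0, haM, hinc, hpie⟩ := ih t1 ⟨ht10, ht11⟩ hcard'
      set a : ℕ → ℝ := fun j => if j = 0 then p else if j = 1 then s else a' (j - 2) with hadef
      have ha2 : ∀ j, a (j + 2) = a' j := by
        intro j
        rw [hadef]
        simp only
        rw [if_neg (by omega), if_neg (by omega), Nat.add_sub_cancel]
      have haone : a 1 = s := by simp [hadef]
      have hazero : a 0 = p := by simp [hadef]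
      refine ⟨m' + 2, a, by omega, hazero, ?_, ?_, ?_⟩
      · rw [ha2, haM]
      · intro j hj
        match j with
        | 0 =>
          rw [hazero, haone]
          exact hsmem.1
        | 1 =>
          have h2 : a 2 = t1 := by rw [show (2:ℕ) = 0 + 2 by rfl, ha2, ha0]
          rw [haone, h2]
          exact hsmem.2
        | (j+2) =>
          rw [ha2, show j + 2 + 1 = (j + 1) + 2 by omega, ha2]
          exact hinc j (by omega)
      · intro j hj
        match j with
        | 0 =>
          left
          rw [hazero, haone]
          exact hsmono
        | 1 =>
          right
          have h2 : a 2 = t1 := by rw [show (2:ℕ) = 0 + 2 by rfl, ha2, ha0]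
          rw [haone, h2]
          exact hsanti
        | (j+2) =>
          rw [ha2, show j + 2 + 1 = (j + 1) + 2 by omega, ha2]
          exact hpie j (by omega)

end Aux

lemma norm_unimodal {d : ℕ} (a v : EuclideanSpace ℝ (Fin d)) :
    ∃ t ∈ Icc (0:ℝ) 1, AntitoneOn (fun x : ℝ => ‖a - x • v‖) (Icc 0 t) ∧
      MonotoneOn (fun x : ℝ => ‖a - x • v‖) (Icc t 1) := by
  have hsq : ∀ x : ℝ, ‖a - x • v‖ ^ 2 = ‖a‖^2 - 2 * (x * (inner ℝ a v : ℝ)) + x^2 * ‖v‖^2 := by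
    intro x
    rw [@norm_sub_sq_real, real_inner_smul_right, norm_smul]
    simp only [Real.norm_eq_abs, mul_pow, sq_abs]
  have key1 : ∀ x y : ℝ, x ≤ y → ‖v‖^2 * (x + y) ≤ 2 * (inner ℝ a v : ℝ) →
      ‖a - y • v‖ ≤ ‖a - x • v‖ := by
    intro x y hxy hineq
    have h2 : ‖a - y • v‖^2 ≤ ‖a - x • v‖^2 := by
      rw [hsq, hsq]
      nlinarith [hineq, hxy]
    exact le_of_pow_le_pow_left₀ two_ne_zero (norm_nonneg _) h2
  have key2 : ∀ x y : ℝ, x ≤ y → 2 * (inner ℝ a v : ℝ) ≤ ‖v‖^2 * (x + y) →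
      ‖a - x • v‖ ≤ ‖a - y • v‖ := by
    intro x y hxy hineq
    have h2 : ‖a - x • v‖^2 ≤ ‖a - y • v‖^2 := by
      rw [hsq, hsq]
      nlinarith [hineq, hxy]
    exact le_of_pow_le_pow_left₀ two_ne_zero (norm_nonneg _) h2
  by_cases hv : v = 0
  · subst hv
    refine ⟨0, ⟨le_refl 0, zero_le_one⟩, ?_, ?_⟩
    · simp only [smul_zero, sub_zero]
      exact antitoneOn_const
    · simp only [smul_zero, sub_zero]
      exact monotoneOn_const
  · have hnv : 0 < ‖v‖^2 := pow_pos (norm_pos_iff.mpr hv) 2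
    set r := (inner ℝ a v : ℝ) / ‖v‖^2 with hrdef
    set t := max 0 (min 1 r) with htdef
    have ht01 : t ∈ Icc (0:ℝ) 1 := ⟨le_max_left _ _, max_le zero_le_one (min_le_left _ _)⟩
    have hcancel : ‖v‖^2 * r = (inner ℝ a v : ℝ) := by
      rw [hrdef]
      field_simp
    refine ⟨t, ht01, ?_, ?_⟩
    · rcases le_or_gt 0 r with hr0 | hr0
      · have htr : t ≤ r := max_le hr0 (min_le_right _ _)
        intro x hx y hy hxy
        apply key1 x y hxy
        have hxy2 : x + y ≤ 2 * r := by
          have h1 := hx.2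
          have h2 := hy.2
          linarith
        have h3 := mul_le_mul_of_nonneg_left hxy2 hnv.le
        have h4 : ‖v‖^2 * (2*r) = 2 * (inner ℝ a v : ℝ) := by
          rw [show ‖v‖^2*(2*r) = 2*(‖v‖^2*r) by ring, hcancel]
        linarith
      · have ht0 : t = 0 := by
          rw [htdef, min_eq_right (hr0.le.trans zero_le_one), max_eq_left hr0.le]
        intro x hx y hy hxy
        have hx0 : x = 0 := le_antisymm (ht0 ▸ hx.2) hx.1
        have hy0 : y = 0 := le_antisymm (ht0 ▸ hy.2) hy.1
        rw [hx0, hy0]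
    · rcases le_or_gt r 1 with hr1 | hr1
      · have htr : r ≤ t := by
          rw [htdef, min_eq_right hr1]
          exact le_max_right _ _
        intro x hx y hy hxy
        apply key2 x y hxy
        have hxy2 : 2 * r ≤ x + y := by
          have h1 := hx.1
          have h2 := hy.1
          linarith
        have h3 := mul_le_mul_of_nonneg_left hxy2 hnv.le
        have h4 : ‖v‖^2 * (2*r) = 2 * (inner ℝ a v : ℝ) := by
          rw [show ‖v‖^2*(2*r) = 2*(‖v‖^2*r) by ring, hcancel]
        linarith
      · have ht1 : t = 1 := by
          rw [htdef, min_eq_left hr1.le, max_eq_right zero_le_one]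
        intro x hx y hy hxy
        have hx1 : x = 1 := le_antisymm hx.2 (ht1 ▸ hx.1)
        have hy1 : y = 1 := le_antisymm hy.2 (ht1 ▸ hy.1)
        rw [hx1, hy1]

lemma aux_main {d : ℕ} (u v : EuclideanSpace ℝ (Fin d))
    (C : Finset (EuclideanSpace ℝ (Fin d))) (hC : C.Nonempty)
    (w : EuclideanSpace ℝ (Fin d) → ℝ) (hw : ∀ c ∈ C, 0 ≤ w c) :
    ∃ (m : ℕ) (a : ℕ → ℝ), m ≤ 2 * C.card ∧ a 0 = 0 ∧ a m = 1 ∧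
      (∀ j < m, a j ≤ a (j + 1)) ∧
      (∀ j < m,
        MonotoneOn (fun x : ℝ => C.inf' hC (fun c => w c * ‖c - (u + x • v)‖))
          (Icc (a j) (a (j+1))) ∨
        AntitoneOn (fun x : ℝ => C.inf' hC (fun c => w c * ‖c - (u + x • v)‖))
          (Icc (a j) (a (j+1)))) := by
  classical
  have hexist : ∀ c : EuclideanSpace ℝ (Fin d), ∃ t ∈ Icc (0:ℝ) 1,
      AntitoneOn (fun x : ℝ => ‖c - (u + x • v)‖) (Icc 0 t) ∧
      MonotoneOn (fun x : ℝ => ‖c - (u + x • v)‖) (Icc t 1) := by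
    intro c
    have heq : (fun x : ℝ => ‖c - (u + x • v)‖) = (fun x : ℝ => ‖(c - u) - x • v‖) := by
      funext x
      rw [sub_add_eq_sub_sub]
    rw [heq]
    exact norm_unimodal (c - u) v
  choose t ht0 hta0 htm0 using hexist
  set f : EuclideanSpace ℝ (Fin d) → ℝ → ℝ := fun c x => w c * ‖c - (u + x • v)‖ with hfdef
  have hta : ∀ c ∈ C, AntitoneOn (f c) (Icc 0 (t c)) := by
    intro c hcC x hx y hy hxy
    exact mul_le_mul_of_nonneg_left (hta0 c hx hy hxy) (hw c hcC)
  have htm : ∀ c ∈ C, MonotoneOn (f c) (Icc (t c) 1) := by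
    intro c hcC x hx y hy hxy
    exact mul_le_mul_of_nonneg_left (htm0 c hx hy hxy) (hw c hcC)
  have hcont : ∀ c ∈ C, Continuous (f c) := by
    intro c _
    apply Continuous.mul continuous_const
    apply Continuous.norm
    fun_prop
  obtain ⟨c0, hc0C, hc0eq⟩ := Finset.exists_mem_eq_inf' hC t
  set tmin := C.inf' hC t with htmindef
  have htmin01 : tmin ∈ Icc (0:ℝ) 1 := by rw [hc0eq]; exact ht0 c0
  have hfirst : AntitoneOn (fun x : ℝ => C.inf' hC (fun c => f c x)) (Icc 0 tmin) := by
    apply aux_inf'_anti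
    intro c hcC
    exact (hta c hcC).mono (Icc_subset_Icc_right (Finset.inf'_le _ hcC))
  have hcard : (C.filter (fun c => tmin < t c)).card ≤ C.card - 1 := by
    have hsub : C.filter (fun c => tmin < t c) ⊆ C.erase c0 := by
      intro c hc
      refine Finset.mem_erase.2 ⟨?_, (Finset.mem_filter.1 hc).1⟩
      rintro rfl
      have h1 := (Finset.mem_filter.1 hc).2
      rw [hc0eq] at h1
      exact lt_irrefl _ h1
    have h2 := Finset.card_le_card hsub
    rw [Finset.card_erase_of_mem hc0C] at h2
    exact h2
  obtain ⟨m', a', hm', ha0', haM', hinc', hpie'⟩ :=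
    aux_rec C hC f t hcont (fun c _ => ht0 c) hta htm (C.card - 1) tmin htmin01 hcard
  have hcpos : 1 ≤ C.card := Finset.card_pos.2 hC
  set a : ℕ → ℝ := fun j => if j = 0 then 0 else a' (j - 1) with hadef
  have ha1 : ∀ j, a (j + 1) = a' j := by
    intro j
    simp only [hadef]
    rw [if_neg (by omega), Nat.add_sub_cancel]
  have hazero : a 0 = 0 := by simp [hadef]
  refine ⟨m' + 1, a, by omega, hazero, ?_, ?_, ?_⟩
  · rw [ha1, haM']
  · intro j hj
    match j with
    | 0 =>
      rw [hazero, ha1, ha0']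
      exact htmin01.1
    | (j+1) =>
      rw [ha1, ha1]
      exact hinc' j (by omega)
  · intro j hj
    match j with
    | 0 =>
      right
      have h1 : a 1 = tmin := by rw [show (1:ℕ) = 0 + 1 by rfl, ha1, ha0']
      rw [hazero, h1]
      exact hfirst
    | (j+1) =>
      rw [ha1, ha1]
      rcases hpie' j (by omega) with hmon | hant
      · exact Or.inl hmon
      · exact Or.inr hant

theorem min_dist_to_segment_piecewise_monotone (d k : ℕ) (r : ℝ) (hr : 0 ≤ r)
    (u v : EuclideanSpace ℝ (Fin d))
    (C : Finset (EuclideanSpace ℝ (Fin d))) (hC : C.Nonempty) (hCcard : C.card = k)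
    (w : EuclideanSpace ℝ (Fin d) → ℝ) (hw : ∀ c ∈ C, 0 ≤ w c)
    (lip : ℝ → ℝ)
    (hmono : ∀ x y, 0 ≤ x → x ≤ y → lip x ≤ lip y)
    (hnonneg : ∀ x, 0 ≤ x → 0 ≤ lip x)
    (hlip : ∀ c x, 1 ≤ c → 0 ≤ x → lip (c * x) ≤ c ^ r * lip x)
    (g : ℝ → ℝ)
    (hg : ∀ x : ℝ, g x = C.inf' hC (fun c => lip (w c * ‖c - (u + x • v)‖))) :
    ∃ (m : ℕ) (a : ℕ → ℝ), m ≤ 2 * k ∧ a 0 = 0 ∧ a m = 1 ∧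
      (∀ i < m, a i ≤ a (i + 1)) ∧
      (∀ i < m, MonotoneOn g (Set.Icc (a i) (a (i + 1))) ∨
        AntitoneOn g (Set.Icc (a i) (a (i + 1)))) := by
  classical
  subst hCcard
  have hφ0 : ∀ x : ℝ, 0 ≤ C.inf' hC (fun c => w c * ‖c - (u + x • v)‖) :=
    fun x => Finset.le_inf' _ _ (fun c hcC => mul_nonneg (hw c hcC) (norm_nonneg _))
  have hgphi : ∀ x : ℝ, g x = lip (C.inf' hC (fun c => w c * ‖c - (u + x • v)‖)) := by
    intro x
    rw [hg]
    apply le_antisymm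
    · obtain ⟨c0, hc0, he⟩ := Finset.exists_mem_eq_inf' hC (fun c => w c * ‖c - (u + x • v)‖)
      rw [he]
      exact Finset.inf'_le (fun c => lip (w c * ‖c - (u + x • v)‖)) hc0
    · apply Finset.le_inf'
      intro c hcC
      exact hmono _ _ (hφ0 x) (Finset.inf'_le _ hcC)
  obtain ⟨m, a, hm, ha0, haM, hinc, hpie⟩ := aux_main u v C hC w hw
  refine ⟨m, a, hm, ha0, haM, hinc, ?_⟩
  intro i hi
  rcases hpie i hi with hmon | hant
  · left
    intro x hx y hy hxy
    rw [hgphi, hgphi]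
    exact hmono _ _ (hφ0 x) (hmon hx hy hxy)
  · right
    intro x hx y hy hxy
    rw [hgphi, hgphi]
    exact hmono _ _ (hφ0 y) (hant hx hy hxy)
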